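/- Let n be a natural number and let A be a subring of the product ring ∏_{i : Fin n} ℤ. Then for every prime ideal 𝔭 of A there exist an index i : Fin n and a prime ideal 𝔮 of ℤ such that 𝔭 is the preimage of 𝔮 under the ring homomorphism A → ℤ obtained by restricting the i-th projection to A; equivalently, 𝔭 = ker(A → ℤ → ℤ/𝔮) where the first map is the restricted i-th projection. -/
import Mathlib


/-- Dress's description of the prime spectrum, abstracted to an arbitrary subring `A`
of a finite product of copies of `ℤ`: every prime ideal of `A` is the preimage of a
prime ideal of `ℤ` under one of the coordinate projections restricted to `A`. -/
theorem stmt5 (n : ℕ) (A : Subring (Fin n → ℤ)) (𝔭 : Ideal A) [𝔭.IsPrime] :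
    ∃ (i : Fin n) (𝔮 : Ideal ℤ), 𝔮.IsPrime ∧
      𝔭 = Ideal.comap ((Pi.evalRingHom (fun _ : Fin n => ℤ) i).comp A.subtype) 𝔮 := by
  set π : (i : Fin n) → (A →+* ℤ) :=
    fun i => (Pi.evalRingHom (fun _ : Fin n => ℤ) i).comp A.subtype with hπ
  have hsurj : ∀ i, Function.Surjective (π i) := by
    intro i z
    exact ⟨⟨(z : Fin n → ℤ), intCast_mem A z⟩, by simp [hπ]⟩
  -- product of kernels is contained in 𝔭
  have hprod : (∏ i : Fin n, RingHom.ker (π i)) ≤ 𝔭 := by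
    refine le_trans (Ideal.prod_le_inf) (le_trans ?_ bot_le)
    intro x hx
    simp only [Ideal.mem_iInf, Finset.inf_eq_iInf, RingHom.mem_ker] at hx
    have : (x : Fin n → ℤ) = 0 := by
      funext i
      exact hx i (Finset.mem_univ i)
    exact Subtype.ext this
  obtain ⟨i, _, hker⟩ := (Ideal.IsPrime.prod_le inferInstance).mp hprod
  refine ⟨i, Ideal.map (π i) 𝔭, Ideal.map_isPrime_of_surjective (hsurj i) hker, ?_⟩
  rw [Ideal.comap_map_of_surjective _ (hsurj i), ← RingHom.ker_eq_comap_bot]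
  exact (sup_eq_left.mpr hker).symm
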